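/- For the Chazy I recursion (n+1)(n² - l²) a_{n+1} - 16(n-2) a_{n-1} + 2 Σ_{m=2}^{n-1} m a_m (3(n-m)+1) a_{n+1-m} = 0 (n = 2,3,...), with integer parameter l ≥ 3 and initial value a_2 = 1, the recursion forces a_3 = a_4 = ⋯ = a_l = 0. -/

import Mathlib

/-- For the Chazy I recursion with integer parameter `l ≥ 3` and `a_2 = 1`, the recursion
forces `a_3 = a_4 = ⋯ = a_l = 0`. -/
theorem stmt_17 (l : ℕ) (hl : 3 ≤ l) (a : ℕ → ℝ) (ha2 : a 2 = 1)
    (hrec : ∀ n : ℕ, 2 ≤ n →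
      ((n : ℝ) + 1) * ((n : ℝ) ^ 2 - (l : ℝ) ^ 2) * a (n + 1)
          - 16 * ((n : ℝ) - 2) * a (n - 1)
          + 2 * ∑ m ∈ Finset.Icc 2 (n - 1),
              (m : ℝ) * a m * (3 * ((n : ℝ) - (m : ℝ)) + 1) * a (n + 1 - m) = 0) :
    ∀ k : ℕ, 3 ≤ k → k ≤ l → a k = 0 := by
  have key : ∀ n : ℕ, 2 ≤ n → n < l → (∀ j, 3 ≤ j → j ≤ n → a j = 0) → a (n + 1) = 0 := by
    intro n hn2 hnl hj
    have h := hrec n hn2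
    have hcast : (n : ℝ) < (l : ℝ) := by exact_mod_cast hnl
    have h0 : (0 : ℝ) ≤ (n : ℝ) := Nat.cast_nonneg n
    have hl2 : (n : ℝ) ^ 2 - (l : ℝ) ^ 2 ≠ 0 := by nlinarith
    have hcoef : ((n : ℝ) + 1) * ((n : ℝ) ^ 2 - (l : ℝ) ^ 2) ≠ 0 :=
      mul_ne_zero (by positivity) hl2
    rcases Nat.lt_or_ge n 4 with h4 | h4
    · interval_cases n
      · -- n = 2 : empty sum
        norm_num [show Finset.Icc 2 1 = (∅ : Finset ℕ) from rfl] at h hcoef ⊢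
        exact h.resolve_left hcoef
      · -- n = 3 : sum over {2}
        norm_num [show Finset.Icc 2 2 = ({2} : Finset ℕ) from rfl, ha2] at h hcoef ⊢
        exact h.resolve_left hcoef
    · -- n ≥ 4
      have hsum : ∑ m ∈ Finset.Icc 2 (n - 1),
          (m : ℝ) * a m * (3 * ((n : ℝ) - (m : ℝ)) + 1) * a (n + 1 - m) = 0 := by
        apply Finset.sum_eq_zero
        intro m hm
        simp only [Finset.mem_Icc] at hm
        rcases eq_or_lt_of_le hm.1 with h2 | h3
        · have : a (n + 1 - m) = 0 := by
            apply hj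
            · omega
            · omega
          rw [this]; ring
        · have : a m = 0 := hj m (by omega) (by omega)
          rw [this]; ring
      have han1 : a (n - 1) = 0 := hj (n - 1) (by omega) (by omega)
      rw [hsum, han1] at h
      have h' : ((n : ℝ) + 1) * ((n : ℝ) ^ 2 - (l : ℝ) ^ 2) * a (n + 1) = 0 := by linarith
      rcases mul_eq_zero.mp h' with h'' | h''
      · exact absurd h'' hcoef
      · exact h''
  intro k
  induction k using Nat.strong_induction_on with
  | _ k IH =>
    intro hk3 hkl
    have hk := key (k - 1) (by omega) (by omega)
      (fun j hj3 hjk => IH j (by omega) hj3 (by omega))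
    rwa [Nat.sub_add_cancel (by omega : 1 ≤ k)] at hk
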